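/- Let L be a non-translation-invariant linear equation with integer coefficients and let B, S be disjoint L-free subsets of {1,...,n}. Define the link graph L_S[B] on vertex set B where x ≠ y are adjacent if there exists z ∈ S such that {x,y,z} (as a multiset, in some order) is a solution to L, and there is a loop at x if {x,x,z} or {x,z,z'} is a solution for some z, z' ∈ S. If I ⊆ B is such that S ∪ I is a maximal L-free subset of {1,...,n}, then I is a maximal independent set in L_S[B]. -/
import Mathlib


/-- `{x, y, z}` is (in some order) a solution to `a₁x₁ + a₂x₂ + a₃x₃ = b`. -/
def IsSolMulti (a₁ a₂ a₃ b : ℤ) (x y z : ℕ) : Prop :=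
  a₁ * x + a₂ * y + a₃ * z = b ∨ a₁ * x + a₂ * z + a₃ * y = b ∨
  a₁ * y + a₂ * x + a₃ * z = b ∨ a₁ * y + a₂ * z + a₃ * x = b ∨
  a₁ * z + a₂ * x + a₃ * y = b ∨ a₁ * z + a₂ * y + a₃ * x = b

/-- `A` contains no solution to the equation `a₁x₁ + a₂x₂ + a₃x₃ = b`. -/
def LFree (a₁ a₂ a₃ b : ℤ) (A : Finset ℕ) : Prop :=
  ∀ x ∈ A, ∀ y ∈ A, ∀ z ∈ A, a₁ * x + a₂ * y + a₃ * z ≠ b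

/-- Distinct `x, y` are adjacent in the link graph `L_S[B]`. -/
def LinkAdj (a₁ a₂ a₃ b : ℤ) (S : Finset ℕ) (x y : ℕ) : Prop :=
  x ≠ y ∧ ∃ z ∈ S, IsSolMulti a₁ a₂ a₃ b x y z

/-- There is a loop at `x` in the link graph `L_S[B]`. -/
def LinkLoop (a₁ a₂ a₃ b : ℤ) (S : Finset ℕ) (x : ℕ) : Prop :=
  (∃ z ∈ S, IsSolMulti a₁ a₂ a₃ b x x z) ∨
  (∃ z ∈ S, ∃ z' ∈ S, IsSolMulti a₁ a₂ a₃ b x z z')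

/-- `I` is an independent set in the link graph `L_S[B]` (no looped vertex, no edge). -/
def LinkIndep (a₁ a₂ a₃ b : ℤ) (S I : Finset ℕ) : Prop :=
  (∀ x ∈ I, ¬ LinkLoop a₁ a₂ a₃ b S x) ∧
  ∀ x ∈ I, ∀ y ∈ I, ¬ LinkAdj a₁ a₂ a₃ b S x y

lemma lfree_no_sol {a₁ a₂ a₃ b : ℤ} {A : Finset ℕ} (hA : LFree a₁ a₂ a₃ b A)
    {x y z : ℕ} (hx : x ∈ A) (hy : y ∈ A) (hz : z ∈ A) :
    ¬ IsSolMulti a₁ a₂ a₃ b x y z := by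
  rintro (h | h | h | h | h | h)
  exacts [hA x hx y hy z hz h, hA x hx z hz y hy h, hA y hy x hx z hz h,
    hA y hy z hz x hx h, hA z hz x hx y hy h, hA z hz y hy x hx h]

lemma key {a₁ a₂ a₃ b : ℤ} {S T B : Finset ℕ} (hT : T ⊆ B) (hdisj : Disjoint B S)
    (hBfree : LFree a₁ a₂ a₃ b B) (hSfree : LFree a₁ a₂ a₃ b S)
    {x y z : ℕ} (hx : x ∈ S ∪ T) (hy : y ∈ S ∪ T) (hz : z ∈ S ∪ T)
    (heq : a₁ * x + a₂ * y + a₃ * z = b) :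
    ¬ LinkIndep a₁ a₂ a₃ b S T := by
  rintro ⟨hloop, hadj⟩
  rcases Finset.mem_union.1 hx with hx | hx <;>
  rcases Finset.mem_union.1 hy with hy | hy <;>
  rcases Finset.mem_union.1 hz with hz | hz
  · exact hSfree x hx y hy z hz heq
  -- x∈S, y∈S, z∈T : loop at z
  · exact hloop z hz (Or.inr ⟨x, hx, y, hy, by unfold IsSolMulti; tauto⟩)
  -- x∈S, y∈T, z∈S : loop at y
  · exact hloop y hy (Or.inr ⟨x, hx, z, hz, by unfold IsSolMulti; tauto⟩)
  -- x∈S, y∈T, z∈T : y,z in T, x∈S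
  · by_cases h : y = z
    · subst h; exact hloop y hy (Or.inl ⟨x, hx, by unfold IsSolMulti; tauto⟩)
    · exact hadj y hy z hz ⟨h, x, hx, by unfold IsSolMulti; tauto⟩
  -- x∈T, y∈S, z∈S : loop at x
  · exact hloop x hx (Or.inr ⟨y, hy, z, hz, by unfold IsSolMulti; tauto⟩)
  -- x∈T, y∈S, z∈T
  · by_cases h : x = z
    · subst h; exact hloop x hx (Or.inl ⟨y, hy, by unfold IsSolMulti; tauto⟩)
    · exact hadj x hx z hz ⟨h, y, hy, by unfold IsSolMulti; tauto⟩
  -- x∈T, y∈T, z∈S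
  · by_cases h : x = y
    · subst h; exact hloop x hx (Or.inl ⟨z, hz, by unfold IsSolMulti; tauto⟩)
    · exact hadj x hx y hy ⟨h, z, hz, by unfold IsSolMulti; tauto⟩
  -- all in T ⊆ B
  · exact hBfree x (hT hx) y (hT hy) z (hT hz) heq

/-- If `L` is not translation-invariant, `B, S` are disjoint `L`-free subsets of `[n]`,
and `I ⊆ B` is such that `S ∪ I` is a maximal `L`-free subset of `[n]`, then `I` is a
maximal independent set in the link graph `L_S[B]`. -/
theorem stmt12 (a₁ a₂ a₃ b : ℤ) (hTI : ¬ (a₁ + a₂ + a₃ = 0 ∧ b = 0))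
    (n : ℕ) (B S I : Finset ℕ) (hB : B ⊆ Finset.Icc 1 n) (hS : S ⊆ Finset.Icc 1 n)
    (hdisj : Disjoint B S) (hBfree : LFree a₁ a₂ a₃ b B) (hSfree : LFree a₁ a₂ a₃ b S)
    (hI : I ⊆ B) (hfree : LFree a₁ a₂ a₃ b (S ∪ I))
    (hmax : ∀ A : Finset ℕ, A ⊆ Finset.Icc 1 n → LFree a₁ a₂ a₃ b A →
      S ∪ I ⊆ A → A = S ∪ I) :
    LinkIndep a₁ a₂ a₃ b S I ∧
      ∀ v ∈ B, v ∉ I → ¬ LinkIndep a₁ a₂ a₃ b S (insert v I) := by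
  constructor
  · constructor
    · rintro x hx (⟨z, hz, hsol⟩ | ⟨z, hz, z', hz', hsol⟩)
      · exact lfree_no_sol hfree (Finset.mem_union_right _ hx)
          (Finset.mem_union_right _ hx) (Finset.mem_union_left _ hz) hsol
      · exact lfree_no_sol hfree (Finset.mem_union_right _ hx)
          (Finset.mem_union_left _ hz) (Finset.mem_union_left _ hz') hsol
    · rintro x hx y hy ⟨hne, z, hz, hsol⟩
      exact lfree_no_sol hfree (Finset.mem_union_right _ hx)
        (Finset.mem_union_right _ hy) (Finset.mem_union_left _ hz) hsol
  · intro v hv hvI hindep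
    have hvS : v ∉ S := Finset.disjoint_left.1 hdisj hv
    have hTsub : insert v I ⊆ B := Finset.insert_subset hv hI
    have hAsub : S ∪ insert v I ⊆ Finset.Icc 1 n :=
      Finset.union_subset hS (hTsub.trans hB)
    have hAnotfree : ¬ LFree a₁ a₂ a₃ b (S ∪ insert v I) := by
      intro hAfree
      have := hmax (S ∪ insert v I) hAsub hAfree
        (Finset.union_subset_union_right (Finset.subset_insert _ _))
      have hvmem : v ∈ S ∪ I := by
        rw [← this]
        exact Finset.mem_union_right _ (Finset.mem_insert_self _ _)
      rcases Finset.mem_union.1 hvmem with h | h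
      · exact hvS h
      · exact hvI h
    unfold LFree at hAnotfree
    push_neg at hAnotfree
    obtain ⟨x, hx, y, hy, z, hz, heq⟩ := hAnotfree
    exact key hTsub hdisj hBfree hSfree hx hy hz heq hindep
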